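/- arXiv:2104.10307 — 3 statements merged into one kernel-verified Lean document; each statement's English description precedes it below -/
import Mathlib

section
/- Let φ, L, L†, V be as in the heavy-ball Lyapunov setup, and let κ ∈ [K̲, K̄] with 0 < K̲ ≤ K̄. For any (q,p) with 𝟙ᵀp = 0, and flow direction (q̇, ṗ) = (p, −κp − L∇φ(q)), the derivative of V along this direction satisfies ⟨∇φ(q), p⟩ − ⟨L∇φ(q), L†p⟩ − κ pᵀL†p = −κ pᵀL†p ≤ 0. -/
open Matrix

/-- Along the heavy-ball flow direction, the Lie derivative of `V`
satisfies `⟨∇φ(q),p⟩ − ⟨L∇φ(q), L†p⟩ − κ pᵀL†p = −κ pᵀL†p ≤ 0`.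
Here `g` denotes `∇φ(q)`. -/
theorem stmt7 (n : ℕ) (L Ld : Matrix (Fin n) (Fin n) ℝ)
    (hsym : L.IsSymm) (hpsd : L.PosSemidef)
    (hker : LinearMap.ker L.mulVecLin =
      Submodule.span ℝ {(fun _ => 1 : Fin n → ℝ)})
    (hmp1 : L * Ld * L = L) (hmp2 : Ld * L * Ld = Ld)
    (hmp3 : (L * Ld)ᵀ = L * Ld) (hmp4 : (Ld * L)ᵀ = Ld * L)
    (Kl Ku κ : ℝ) (hKl : 0 < Kl) (hKlKu : Kl ≤ Ku) (hκ : κ ∈ Set.Icc Kl Ku)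
    (g p : Fin n → ℝ) (hp : (∑ i, p i) = 0) :
    g ⬝ᵥ p - (L.mulVec g) ⬝ᵥ (Ld.mulVec p) - κ * (p ⬝ᵥ Ld.mulVec p) =
      -(κ * (p ⬝ᵥ Ld.mulVec p)) ∧
    g ⬝ᵥ p - (L.mulVec g) ⬝ᵥ (Ld.mulVec p) - κ * (p ⬝ᵥ Ld.mulVec p) ≤ 0 := by
  have hLT : Lᵀ = L := hsym
  -- L * (L * Ld) = L
  have hLLLd : L * (L * Ld) = L := by
    have : (L * (L * Ld))ᵀ = L := by
      rw [Matrix.transpose_mul, hmp3, hLT]; exact hmp1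
    calc L * (L * Ld) = (L * (L * Ld))ᵀᵀ := by rw [Matrix.transpose_transpose]
      _ = Lᵀ := by rw [this]
      _ = L := hLT
  -- (L*Ld) is idempotent
  have hidem : (L * Ld) * (L * Ld) = L * Ld := by
    calc (L * Ld) * (L * Ld) = L * (Ld * L * Ld) := by
          rw [Matrix.mul_assoc L Ld (L * Ld), ← Matrix.mul_assoc Ld L Ld]
      _ = L * Ld := by rw [hmp2]
  -- key projection fact: (L*Ld) p = p
  have hproj : (L * Ld).mulVec p = p := by
    set r : Fin n → ℝ := p - (L * Ld).mulVec p with hr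
    -- L r = 0
    have hLr : L.mulVec r = 0 := by
      simp only [hr, Matrix.mulVec_sub, Matrix.mulVec_mulVec, hLLLd, sub_self]
    -- r ∈ span {1}
    have hrker : r ∈ LinearMap.ker L.mulVecLin := by
      simpa [Matrix.mulVecLin_apply] using hLr
    rw [hker, Submodule.mem_span_singleton] at hrker
    obtain ⟨c, hc⟩ := hrker
    -- (L*Ld) r = 0
    have hPr : (L * Ld).mulVec r = 0 := by
      simp only [hr, Matrix.mulVec_sub, Matrix.mulVec_mulVec, hidem, sub_self]
    -- r ⬝ᵥ p = 0
    have hrp : r ⬝ᵥ p = 0 := by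
      rw [← hc]
      simp [dotProduct, ← Finset.mul_sum, hp]
    -- r ⬝ᵥ (L*Ld) p = 0
    have hrPp : r ⬝ᵥ (L * Ld).mulVec p = 0 := by
      rw [Matrix.dotProduct_mulVec, ← Matrix.mulVec_transpose, hmp3, hPr,
        zero_dotProduct]
    have hrr : r ⬝ᵥ r = 0 := by
      have : r ⬝ᵥ r = r ⬝ᵥ p - r ⬝ᵥ (L * Ld).mulVec p := by
        rw [hr]; rw [dotProduct_sub]
      rw [this, hrp, hrPp, sub_zero]
    have : r = 0 := dotProduct_self_eq_zero.mp hrr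
    have := sub_eq_zero.mp (by rw [← hr]; exact this)
    exact this.symm
  -- first conjunct: (L g) ⬝ᵥ (Ld p) = g ⬝ᵥ p
  have hmain : (L.mulVec g) ⬝ᵥ (Ld.mulVec p) = g ⬝ᵥ p := by
    calc (L.mulVec g) ⬝ᵥ (Ld.mulVec p)
        = g ⬝ᵥ (Lᵀ.mulVec (Ld.mulVec p)) := by
          rw [dotProduct_comm, Matrix.dotProduct_mulVec,
            dotProduct_comm, ← Matrix.mulVec_transpose]
      _ = g ⬝ᵥ ((L * Ld).mulVec p) := by rw [hLT, Matrix.mulVec_mulVec]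
      _ = g ⬝ᵥ p := by rw [hproj]
  -- nonnegativity of p ⬝ᵥ Ld p
  have hnn : 0 ≤ p ⬝ᵥ Ld.mulVec p := by
    have hpL : p = L.mulVec (Ld.mulVec p) := by
      rw [Matrix.mulVec_mulVec, hproj]
    have := hpsd.dotProduct_mulVec_nonneg (Ld.mulVec p)
    calc (0:ℝ) ≤ star (Ld.mulVec p) ⬝ᵥ L.mulVec (Ld.mulVec p) := this
      _ = (Ld.mulVec p) ⬝ᵥ L.mulVec (Ld.mulVec p) := by simp
      _ = L.mulVec (Ld.mulVec p) ⬝ᵥ (Ld.mulVec p) := dotProduct_comm _ _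
      _ = p ⬝ᵥ Ld.mulVec p := by rw [← hpL]
  have hκpos : 0 < κ := lt_of_lt_of_le hKl hκ.1
  constructor
  · rw [hmain]; ring
  · rw [hmain]
    have : 0 ≤ κ * (p ⬝ᵥ Ld.mulVec p) := mul_nonneg hκpos.le hnn
    linarith
end

section
/- Let κ: ℝ²ⁿ ⇉ ℝ be defined by κ(q,p) = {K̄} if ⟨L∇φ(q), p⟩ > 0, {K̲} if ⟨L∇φ(q), p⟩ < 0, and [K̲, K̄] if ⟨L∇φ(q), p⟩ = 0, with 0 < K̲ ≤ K̄ and ∇φ continuous. Then the set-valued flow map F(q,p) = {(p, −kp − L∇φ(q)) : k ∈ κ(q,p)} has closed graph, is locally bounded, and has nonempty convex values at every point. -/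
open Set Matrix

/-- The set-valued gain of the hybrid-inspired heavy ball method. -/
def kset (Kl Ku s : ℝ) : Set ℝ :=
  if 0 < s then {Ku} else if s < 0 then {Kl} else Set.Icc Kl Ku

/-- Closed characterization of membership in `kset`. -/
lemma kset_iff (Kl Ku s k : ℝ) (h : Kl ≤ Ku) :
    k ∈ kset Kl Ku s ↔
      k ∈ Set.Icc Kl Ku ∧ (k - Ku) * max s 0 = 0 ∧ (k - Kl) * min s 0 = 0 := by
  unfold kset
  rcases lt_trichotomy s 0 with hs | hs | hs
  · rw [if_neg (by linarith), if_pos hs, max_eq_right hs.le, min_eq_left hs.le]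
    constructor
    · rintro rfl
      exact ⟨⟨le_rfl, h⟩, by ring, by ring⟩
    · rintro ⟨-, -, h2⟩
      have : k - Kl = 0 := by
        rcases mul_eq_zero.mp h2 with h' | h'
        · exact h'
        · exact absurd h' (ne_of_lt hs)
      simp only [Set.mem_singleton_iff]
      linarith
  · subst hs
    rw [if_neg (lt_irrefl 0), if_neg (lt_irrefl 0)]
    simp
  · rw [if_pos hs, max_eq_left hs.le, min_eq_right hs.le]
    constructor
    · rintro rfl
      exact ⟨⟨h, le_rfl⟩, by ring, by ring⟩
    · rintro ⟨-, h1, -⟩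
      have : k - Ku = 0 := by
        rcases mul_eq_zero.mp h1 with h' | h'
        · exact h'
        · exact absurd h' (ne_of_gt hs)
      simp only [Set.mem_singleton_iff]
      linarith

lemma kset_subset_Icc (Kl Ku s : ℝ) (h : Kl ≤ Ku) :
    kset Kl Ku s ⊆ Set.Icc Kl Ku := by
  intro k hk
  exact ((kset_iff Kl Ku s k h).mp hk).1

lemma kset_nonempty (Kl Ku s : ℝ) (h : Kl ≤ Ku) : (kset Kl Ku s).Nonempty := by
  unfold kset
  split_ifs
  · exact ⟨Ku, rfl⟩
  · exact ⟨Kl, rfl⟩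
  · exact ⟨Kl, Set.mem_Icc.mpr ⟨le_rfl, h⟩⟩

lemma kset_convex (Kl Ku s : ℝ) : Convex ℝ (kset Kl Ku s) := by
  unfold kset
  split_ifs
  · exact convex_singleton _
  · exact convex_singleton _
  · exact convex_Icc _ _

/-- The set-valued heavy-ball flow map
`F(q,p) = {(p, −kp − L∇φ(q)) : k ∈ κ(q,p)}` has closed graph, is locally bounded,
and has nonempty convex values (the hybrid basic conditions). Here `g = ∇φ` is
continuous and `0 < K̲ ≤ K̄`. -/
theorem stmt13 (n : ℕ) (L : Matrix (Fin n) (Fin n) ℝ)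
    (g : (Fin n → ℝ) → (Fin n → ℝ)) (hg : Continuous g)
    (Kl Ku : ℝ) (hKl : 0 < Kl) (hKlKu : Kl ≤ Ku)
    (F : (Fin n → ℝ) × (Fin n → ℝ) → Set ((Fin n → ℝ) × (Fin n → ℝ)))
    (hF : ∀ q p : Fin n → ℝ, F (q, p) =
      {v | ∃ k ∈ kset Kl Ku ((L.mulVec (g q)) ⬝ᵥ p),
        v = (p, -(k • p) - L.mulVec (g q))}) :
    IsClosed {x : ((Fin n → ℝ) × (Fin n → ℝ)) × ((Fin n → ℝ) × (Fin n → ℝ)) |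
      x.2 ∈ F x.1} ∧
    (∀ x : (Fin n → ℝ) × (Fin n → ℝ), ∃ ε > (0:ℝ), ∃ M : ℝ,
      ∀ y, ‖y - x‖ ≤ ε → ∀ v ∈ F y, ‖v‖ ≤ M) ∧
    (∀ x : (Fin n → ℝ) × (Fin n → ℝ), (F x).Nonempty ∧ Convex ℝ (F x)) := by
  have hF' : ∀ x : (Fin n → ℝ) × (Fin n → ℝ), F x =
      {v | ∃ k ∈ kset Kl Ku ((L.mulVec (g x.1)) ⬝ᵥ x.2),
        v = (x.2, -(k • x.2) - L.mulVec (g x.1))} := by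
    rintro ⟨q, p⟩; exact hF q p
  refine ⟨?_, ?_, ?_⟩
  · -- closed graph
    haveI : CompactSpace (Set.Icc Kl Ku) := isCompact_iff_compactSpace.mp isCompact_Icc
    let X := (Fin n → ℝ) × (Fin n → ℝ)
    set s : X → ℝ := fun x => L.mulVec (g x.1) ⬝ᵥ x.2 with hs_def
    have hs : Continuous s :=
      Continuous.dotProduct
        (Continuous.matrix_mulVec continuous_const (hg.comp continuous_fst)) continuous_snd
    set S : Set ((Set.Icc Kl Ku) × (X × X)) :=
      {z | z.2.2.1 = z.2.1.2 ∧ ((z.1 : ℝ) - Ku) * max (s z.2.1) 0 = 0 ∧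
        ((z.1 : ℝ) - Kl) * min (s z.2.1) 0 = 0 ∧
        z.2.2.2 = -((z.1 : ℝ) • z.2.1.2) - L.mulVec (g z.2.1.1)} with hS_def
    have hk_cont : Continuous fun z : (Set.Icc Kl Ku) × (X × X) => (z.1 : ℝ) :=
      continuous_subtype_val.comp continuous_fst
    have hsz : Continuous fun z : (Set.Icc Kl Ku) × (X × X) => s z.2.1 :=
      hs.comp (continuous_fst.comp continuous_snd)
    have hp1 : Continuous fun z : (Set.Icc Kl Ku) × (X × X) => z.2.1.2 :=
      continuous_snd.comp (continuous_fst.comp continuous_snd)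
    have hq1 : Continuous fun z : (Set.Icc Kl Ku) × (X × X) => z.2.1.1 :=
      continuous_fst.comp (continuous_fst.comp continuous_snd)
    have hSclosed : IsClosed S := by
      refine IsClosed.inter (isClosed_eq ?_ ?_) (IsClosed.inter (isClosed_eq ?_ ?_)
        (IsClosed.inter (isClosed_eq ?_ ?_) (isClosed_eq ?_ ?_)))
      · exact continuous_fst.comp (continuous_snd.comp continuous_snd)
      · exact hp1
      · exact (hk_cont.sub continuous_const).mul (hsz.max continuous_const)
      · exact continuous_const
      · exact (hk_cont.sub continuous_const).mul (hsz.min continuous_const)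
      · exact continuous_const
      · exact continuous_snd.comp (continuous_snd.comp continuous_snd)
      · exact ((hk_cont.smul hp1).neg).sub
          (Continuous.matrix_mulVec continuous_const (hg.comp hq1))
    have hgraph : {x : X × X | x.2 ∈ F x.1} = Prod.snd '' S := by
      ext x
      simp only [Set.mem_setOf_eq, hF' x.1, Set.mem_image]
      constructor
      · rintro ⟨k, hk, hv⟩
        rw [kset_iff _ _ _ _ hKlKu] at hk
        refine ⟨(⟨k, hk.1⟩, x), ⟨?_, hk.2.1, hk.2.2, ?_⟩, rfl⟩
        · rw [hv]
        · rw [hv]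
      · rintro ⟨⟨k, z⟩, ⟨h1, h2, h3, h4⟩, rfl⟩
        exact ⟨(k : ℝ), (kset_iff _ _ _ _ hKlKu).mpr ⟨k.2, h2, h3⟩, Prod.ext h1 h4⟩
    rw [hgraph]
    exact isClosedMap_snd_of_compactSpace S hSclosed
  · -- local boundedness
    intro x
    obtain ⟨C, hC⟩ :=
      (isCompact_closedBall x.1 1).exists_bound_of_continuousOn
        ((Continuous.matrix_mulVec continuous_const hg).continuousOn :
          ContinuousOn (fun q => L.mulVec (g q)) (Metric.closedBall x.1 1))
    refine ⟨1, one_pos, max (‖x.2‖ + 1) (Ku * (‖x.2‖ + 1) + C), fun y hy v hv => ?_⟩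
    rw [hF' y] at hv
    obtain ⟨k, hk, rfl⟩ := hv
    have hk' := kset_subset_Icc Kl Ku _ hKlKu hk
    have hy2 : ‖y.2‖ ≤ ‖x.2‖ + 1 := by
      have h1 : ‖y.2 - x.2‖ ≤ 1 := le_trans (norm_snd_le (y - x)) hy
      have := norm_sub_norm_le y.2 x.2
      linarith
    have hy1 : y.1 ∈ Metric.closedBall x.1 1 := by
      rw [Metric.mem_closedBall, dist_eq_norm]
      exact le_trans (norm_fst_le (y - x)) hy
    have hC1 := hC y.1 hy1
    rw [Prod.norm_def]
    apply max_le
    · exact le_trans hy2 (le_max_left _ _)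
    · refine le_trans (norm_sub_le _ _) (le_trans ?_ (le_max_right _ _))
      rw [norm_neg, norm_smul, Real.norm_eq_abs,
        abs_of_nonneg (le_trans hKl.le hk'.1)]
      have hkK : k ≤ Ku := hk'.2
      have h1 : k * ‖y.2‖ ≤ Ku * (‖x.2‖ + 1) := by
        apply mul_le_mul hkK hy2 (norm_nonneg _) (le_trans hKl.le hKlKu)
      linarith
  · -- nonempty convex values
    intro x
    rw [hF' x]
    constructor
    · obtain ⟨k, hk⟩ := kset_nonempty Kl Ku (L.mulVec (g x.1) ⬝ᵥ x.2) hKlKu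
      exact ⟨_, k, hk, rfl⟩
    · rintro v1 ⟨k1, hk1, rfl⟩ v2 ⟨k2, hk2, rfl⟩ a b ha hb hab
      refine ⟨a * k1 + b * k2, kset_convex Kl Ku _ hk1 hk2 ha hb hab, ?_⟩
      refine Prod.ext ?_ ?_
      · show a • x.2 + b • x.2 = x.2
        rw [← add_smul, hab, one_smul]
      · show a • (-(k1 • x.2) - L.mulVec (g x.1)) + b • (-(k2 • x.2) - L.mulVec (g x.1))
          = -((a * k1 + b * k2) • x.2) - L.mulVec (g x.1)
        rw [smul_sub, smul_sub, smul_neg, smul_neg, smul_smul, smul_smul, add_smul, neg_add]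
        have : a • L.mulVec (g x.1) + b • L.mulVec (g x.1) = L.mulVec (g x.1) := by
          rw [← add_smul, hab, one_smul]
        rw [sub_add_sub_comm, this]
end

section
/- Consider a timer variable τ evolving according to the hybrid dynamics: during flows τ̇ ∈ [0, δ] with τ constrained to [0, N₀], and at jumps (allowed only when τ ∈ [1, N₀]) τ⁺ = τ − 1. Then along any solution, the number of jumps j in any hybrid time interval from (s, j₁) to (t, j₂) satisfies j₂ − j₁ ≤ δ(t − s) + N₀. -/
open Set

/-- The Cai–Teel–Goebel dwell-time automaton: a timer `τ` flows with
rate in `[0, δ]`, stays in `[0, N₀]`, may jump only when `τ ≥ 1`, and decreases by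
`1` at each jump.  Then along any solution, the number of jumps between hybrid
times `(s, j₁)` and `(u, j₂)` satisfies `j₂ − j₁ ≤ δ(u − s) + N₀`.
A solution is modeled by its nondecreasing jump times `t : ℕ → ℝ` and the timer
value `τ j` on the `j`-th flow interval `[t j, t (j+1)]`. -/
theorem stmt15 (δ : ℝ) (hδ : 0 ≤ δ) (N₀ : ℕ) (hN₀ : 0 < N₀)
    (t : ℕ → ℝ) (ht : ∀ j : ℕ, t j ≤ t (j + 1))
    (τ : ℕ → ℝ → ℝ)
    (hflow : ∀ j : ℕ, ∀ s u : ℝ, t j ≤ s → s ≤ u → u ≤ t (j + 1) →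
      0 ≤ τ j u - τ j s ∧ τ j u - τ j s ≤ δ * (u - s))
    (hrange : ∀ j : ℕ, ∀ s ∈ Icc (t j) (t (j + 1)), τ j s ∈ Icc (0:ℝ) (N₀:ℝ))
    (hjump : ∀ j : ℕ, 1 ≤ τ j (t (j + 1)) ∧
      τ (j + 1) (t (j + 1)) = τ j (t (j + 1)) - 1) :
    ∀ j₁ j₂ : ℕ, ∀ s u : ℝ, j₁ ≤ j₂ →
      s ∈ Icc (t j₁) (t (j₁ + 1)) → u ∈ Icc (t j₂) (t (j₂ + 1)) → s ≤ u →
      ((j₂ : ℝ) - (j₁ : ℝ)) ≤ δ * (u - s) + (N₀ : ℝ) := by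
  intro j₁ j₂ s u hle hs hu hsu
  -- key invariant by induction
  have key : ∀ k, j₁ ≤ k → τ k (t (k + 1)) - τ j₁ s ≤ δ * (t (k + 1) - s) - ((k : ℝ) - j₁) := by
    intro k hk
    induction k, hk using Nat.le_induction with
    | base =>
      have h := (hflow j₁ s (t (j₁ + 1)) hs.1 hs.2 le_rfl).2
      simp only [sub_self]
      linarith
    | succ k hk ih =>
      have h := (hflow (k + 1) (t (k + 1)) (t (k + 2)) le_rfl (ht (k + 1)) le_rfl).2
      have hj := (hjump k).2
      have hk1 : ((k + 1 : ℕ) : ℝ) = (k : ℝ) + 1 := by push_cast; ring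
      rw [hk1]
      have hts : s ≤ t (k + 1) := by
        have : t (j₁ + 1) ≤ t (k + 1) := by
          exact monotone_nat_of_le_succ ht (by omega)
        linarith [hs.2]
      nlinarith [ht (k+1)]
  rcases Nat.eq_or_lt_of_le hle with heq | hlt
  · subst heq
    have hN : (0:ℝ) ≤ (N₀ : ℝ) := Nat.cast_nonneg _
    have : (0:ℝ) ≤ δ * (u - s) := mul_nonneg hδ (by linarith)
    simp only [sub_self]
    linarith
  · obtain ⟨k, rfl⟩ : ∃ k, j₂ = k + 1 := ⟨j₂ - 1, by omega⟩
    have hk : j₁ ≤ k := by omega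
    have hkey := key k hk
    have hfl := (hflow (k + 1) (t (k + 1)) u le_rfl hu.1 hu.2).2
    have hr1 := (hrange j₁ s hs).2
    have hr2 := (hrange (k + 1) u hu).1
    have hj := (hjump k).2
    have hk1 : ((k + 1 : ℕ) : ℝ) = (k : ℝ) + 1 := by push_cast; ring
    rw [hk1]
    nlinarith
end
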